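/- Let π_prim and π_int be autoregressive policies on finite vocabulary V over horizon T, S a switching rule with mixed policy π_mix (equal to π_int when S(h)=1 and π_prim when S(h)=0), and let M = ½(P_mix + P_int), with α_t(h) = (P_mix)_{<t}(h)/((P_mix)_{<t}(h)+(P_int)_{<t}(h)). Suppose that for every t and prefix h with M_{<t}(h) > 0 and S(h)=0, the skew divergence satisfies D_JS^{α_t(h)}(π_prim(·|h) ‖ π_int(·|h)) ≤ ε. Then, with N_0 = Σ_{t=1}^T 1{S(X_{<t})=0}, JS(P_mix ‖ P_int) ≤ ε · E_{X ∼ M}[N_0] = (ε/2)( E_{P_mix}[N_0] + E_{P_int}[N_0] ). -/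

import Mathlib

open Finset

/-- KL divergence between two (finitely supported) mass functions, with the
convention `0 log 0 = 0`. -/
noncomputable def KL {X : Type*} [Fintype X] (μ ν : X → ℝ) : ℝ :=
  ∑ x, if μ x = 0 then 0 else μ x * Real.log (μ x / ν x)

/-- `μ` is a probability mass function on the finite type `X`. -/
def IsPMF {X : Type*} [Fintype X] (μ : X → ℝ) : Prop :=
  (∀ x, 0 ≤ μ x) ∧ ∑ x, μ x = 1

/-- Jensen–Shannon divergence. -/
noncomputable def JS {X : Type*} [Fintype X] (μ ν : X → ℝ) : ℝ :=
  (1/2) * KL μ (fun x => (μ x + ν x) / 2) + (1/2) * KL ν (fun x => (μ x + ν x) / 2)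

/-- Skew Jensen–Shannon divergence with skew parameter `α`. -/
noncomputable def skewJS {X : Type*} [Fintype X] (α : ℝ) (μ ν : X → ℝ) : ℝ :=
  α * KL μ (fun x => α * μ x + (1 - α) * ν x)
    + (1 - α) * KL ν (fun x => α * μ x + (1 - α) * ν x)

/-- The sequence-level distribution on `Fin T → V` induced by an autoregressive
family of conditionals `π t : (Fin t → V) → V → ℝ`. -/
noncomputable def seqProb {V : Type*} (π : (t : ℕ) → (Fin t → V) → V → ℝ) (T : ℕ)
    (x : Fin T → V) : ℝ :=
  ∏ t : Fin T, π t (fun i => x (Fin.castLE t.isLt.le i)) (x t)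

/-- The marginal of the prefix `X_{<t}` under a distribution `P` on `Fin T → V`. -/
noncomputable def prefixMarginal {V : Type*} [Fintype V] [DecidableEq V] {T : ℕ}
    (P : (Fin T → V) → ℝ) {t : ℕ} (ht : t ≤ T) (h : Fin t → V) : ℝ :=
  ∑ x ∈ Finset.univ.filter
      (fun x : Fin T → V => ∀ i : Fin t, x (Fin.castLE ht i) = h i), P x

section aux
variable {V : Type*} [Fintype V] [DecidableEq V]
set_option linter.unusedSectionVars false

lemma sum_snoc_eq {n : ℕ} (f : (Fin (n+1) → V) → ℝ) :
    ∑ x : Fin (n+1) → V, f x = ∑ h : Fin n → V, ∑ v : V, f (Fin.snoc h v) := by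
  rw [← (Fin.snocEquiv (fun _ => V)).sum_comp f]
  rw [Fintype.sum_prod_type, Finset.sum_comm]
  rfl

lemma snoc_castLE {n t : ℕ} (ht : t ≤ n) (h : Fin n → V) (v : V) (i : Fin t)
    (ht' : t ≤ n + 1) :
    (Fin.snoc h v : Fin (n+1) → V) (Fin.castLE ht' i) = h (Fin.castLE ht i) := by
  have : Fin.castLE ht' i = Fin.castSucc (Fin.castLE ht i) := rfl
  rw [this, Fin.snoc_castSucc]

lemma seqProb_snoc (π : (t : ℕ) → (Fin t → V) → V → ℝ) {n : ℕ} (h : Fin n → V) (v : V) :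
    seqProb π (n+1) (Fin.snoc h v) = seqProb π n h * π n h v := by
  unfold seqProb
  rw [Fin.prod_univ_castSucc]
  congr 1
  · apply Finset.prod_congr rfl
    intro t _
    rw [Fin.snoc_castSucc]
    congr 1
    funext i
    exact snoc_castLE t.isLt.le h v i _
  · have h1 : (fun i : Fin n => (Fin.snoc h v : Fin (n+1) → V)
        (Fin.castLE (Fin.last n).isLt.le i)) = h := by
      funext i
      have := snoc_castLE (le_refl n) h v i (Fin.last n).isLt.le
      simpa using this
    rw [Fin.snoc_last]
    show π n (fun i => (Fin.snoc h v : Fin (n+1) → V) (Fin.castLE (Fin.last n).isLt.le i)) v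
      = π n h v
    rw [h1]


lemma seqProb_nonneg (π : (t : ℕ) → (Fin t → V) → V → ℝ)
    (hπ : ∀ t h v, 0 ≤ π t h v) {n : ℕ} (x : Fin n → V) : 0 ≤ seqProb π n x :=
  Finset.prod_nonneg fun _ _ => hπ _ _ _

lemma seqProb_sum (π : (t : ℕ) → (Fin t → V) → V → ℝ)
    (hπ : ∀ t h, ∑ v, π t h v = 1) :
    ∀ n : ℕ, ∑ x : Fin n → V, seqProb π n x = 1 := by
  intro n
  induction n with
  | zero =>
    rw [Fintype.sum_eq_single (fun i => i.elim0)]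
    · simp [seqProb]
    · intro x hx
      exact absurd (funext fun i => i.elim0) hx
  | succ n IH =>
    rw [sum_snoc_eq]
    have : ∀ h : Fin n → V, ∑ v, seqProb π (n+1) (Fin.snoc h v)
        = seqProb π n h := by
      intro h
      simp_rw [seqProb_snoc]
      rw [← Finset.mul_sum, hπ, mul_one]
    simp_rw [this]
    exact IH

lemma prefixMarginal_self {T : ℕ} (P : (Fin T → V) → ℝ) (h : Fin T → V) :
    prefixMarginal P le_rfl h = P h := by
  unfold prefixMarginal
  have : Finset.univ.filter
      (fun x : Fin T → V => ∀ i : Fin T, x (Fin.castLE le_rfl i) = h i) = {h} := by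
    ext x
    simp only [Finset.mem_filter, Finset.mem_univ, true_and, Finset.mem_singleton]
    constructor
    · intro hx; funext i; exact hx i
    · intro hx i; rw [hx]; rfl
  rw [this, Finset.sum_singleton]


lemma prefixMarginal_seqProb (π : (t : ℕ) → (Fin t → V) → V → ℝ)
    (hπ : ∀ t h, ∑ v, π t h v = 1) :
    ∀ (T t : ℕ) (ht : t ≤ T) (h : Fin t → V),
      prefixMarginal (seqProb π T) ht h = seqProb π t h := by
  intro T
  induction T with
  | zero =>
    intro t ht h
    rcases Nat.le_zero.mp ht
    exact prefixMarginal_self _ h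
  | succ n IH =>
    intro t ht h
    rcases eq_or_lt_of_le ht with rfl | ht'
    · exact prefixMarginal_self _ h
    · have htn : t ≤ n := Nat.lt_succ_iff.mp ht'
      unfold prefixMarginal
      rw [Finset.sum_filter, sum_snoc_eq]
      have key : ∀ (h' : Fin n → V) (v : V),
          (∀ i : Fin t, (Fin.snoc h' v : Fin (n+1) → V) (Fin.castLE ht i) = h i)
            ↔ (∀ i : Fin t, h' (Fin.castLE htn i) = h i) := by
        intro h' v
        constructor
        · intro hh i; rw [← hh i]; exact (snoc_castLE htn h' v i ht).symm
        · intro hh i; rw [snoc_castLE htn h' v i ht]; exact hh i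
      have step : ∀ h' : Fin n → V,
          (∑ v : V, if (∀ i : Fin t, (Fin.snoc h' v : Fin (n+1) → V)
              (Fin.castLE ht i) = h i) then seqProb π (n+1) (Fin.snoc h' v) else 0)
          = if (∀ i : Fin t, h' (Fin.castLE htn i) = h i)
              then seqProb π n h' else 0 := by
        intro h'
        by_cases hc : ∀ i : Fin t, h' (Fin.castLE htn i) = h i
        · rw [if_pos hc]
          have : ∀ v : V, (if (∀ i : Fin t, (Fin.snoc h' v : Fin (n+1) → V)
              (Fin.castLE ht i) = h i) then seqProb π (n+1) (Fin.snoc h' v) else 0)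
              = seqProb π n h' * π n h' v := by
            intro v
            rw [if_pos ((key h' v).mpr hc), seqProb_snoc]
          simp_rw [this]
          rw [← Finset.mul_sum, hπ, mul_one]
        · rw [if_neg hc]
          have : ∀ v : V, (if (∀ i : Fin t, (Fin.snoc h' v : Fin (n+1) → V)
              (Fin.castLE ht i) = h i) then seqProb π (n+1) (Fin.snoc h' v) else 0)
              = 0 := by
            intro v
            rw [if_neg (fun hh => hc ((key h' v).mp hh))]
          simp_rw [this]
          exact Finset.sum_const_zero
      simp_rw [step]
      rw [← Finset.sum_filter]
      exact IH t htn h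

lemma prefixMarginal_grouping {T t : ℕ} (ht : t ≤ T) (P : (Fin T → V) → ℝ)
    (f : (Fin t → V) → ℝ) :
    ∑ h : Fin t → V, prefixMarginal P ht h * f h
      = ∑ x : Fin T → V, P x * f (fun i => x (Fin.castLE ht i)) := by
  unfold prefixMarginal
  have : ∀ h : Fin t → V,
      (∑ x ∈ Finset.univ.filter
        (fun x : Fin T → V => ∀ i : Fin t, x (Fin.castLE ht i) = h i), P x) * f h
      = ∑ x ∈ Finset.univ.filter
        (fun x : Fin T → V => (fun i : Fin t => x (Fin.castLE ht i)) = h),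
          P x * f (fun i => x (Fin.castLE ht i)) := by
    intro h
    rw [Finset.sum_mul]
    apply Finset.sum_congr
    · apply Finset.filter_congr
      intro x _
      simp [funext_iff]
    · intro x hx
      have := (Finset.mem_filter.mp hx).2
      rw [this]
  simp_rw [this]
  exact Finset.sum_fiberwise _ _ _

lemma prefixMarginal_add {T t : ℕ} (ht : t ≤ T) (P Q : (Fin T → V) → ℝ) (h : Fin t → V) :
    prefixMarginal (fun x => (P x + Q x) / 2) ht h
      = (prefixMarginal P ht h + prefixMarginal Q ht h) / 2 := by
  unfold prefixMarginal
  rw [← Finset.sum_add_distrib, ← Finset.sum_div]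


lemma kl_step (a m0 : ℝ) (μ m1 : V → ℝ) (ha : 0 ≤ a)
    (hμ0 : ∀ v, 0 ≤ μ v) (hμ1 : ∑ v, μ v = 1)
    (hm0 : a / 2 ≤ m0) (hm1 : ∀ v, a * μ v / 2 ≤ m1 v) :
    (∑ v, if a * μ v = 0 then 0 else a * μ v * Real.log (a * μ v / m1 v))
      = (if a = 0 then 0 else a * Real.log (a / m0))
        + ∑ v, a * μ v * Real.log (μ v * m0 / m1 v) := by
  by_cases haz : a = 0
  · simp [haz]
  · have hapos : 0 < a := ha.lt_of_ne (Ne.symm haz)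
    have hm0pos : 0 < m0 := lt_of_lt_of_le (by linarith) hm0
    have key : ∀ v, (if a * μ v = 0 then 0 else a * μ v * Real.log (a * μ v / m1 v))
        = a * μ v * Real.log (μ v * m0 / m1 v) + a * Real.log (a / m0) * μ v := by
      intro v
      by_cases hv : μ v = 0
      · simp [hv]
      · have hμpos : 0 < μ v := (hμ0 v).lt_of_ne (Ne.symm hv)
        have hm1pos : 0 < m1 v := lt_of_lt_of_le (by positivity) (hm1 v)
        rw [if_neg (by positivity)]
        have harg : a * μ v / m1 v = (μ v * m0 / m1 v) * (a / m0) := by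
          field_simp
        rw [harg, Real.log_mul (by positivity) (by positivity)]
        ring
    simp_rw [key]
    rw [Finset.sum_add_distrib, ← Finset.mul_sum, hμ1, mul_one, if_neg haz, add_comm]

lemma combine (a b : ℝ) (ha : 0 ≤ a) (hb : 0 ≤ b) (μ ν : V → ℝ) :
    (1/2) * (∑ v, a * μ v * Real.log (μ v * ((a+b)/2) / ((a * μ v + b * ν v)/2)))
      + (1/2) * (∑ v, b * ν v * Real.log (ν v * ((a+b)/2) / ((a * μ v + b * ν v)/2)))
      = ((a+b)/2) * skewJS (a/(a+b)) μ ν := by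
  by_cases hab : a + b = 0
  · have ha0 : a = 0 := by linarith [(by linarith : a ≤ 0)]
    have hb0 : b = 0 := by linarith
    simp [ha0, hb0]
  · have habpos : 0 < a + b := lt_of_le_of_ne (by linarith) (Ne.symm hab)
    set α := a / (a + b) with hα
    have h1α : 1 - α = b / (a + b) := by
      rw [hα, sub_eq_iff_eq_add, ← add_div, add_comm b a, div_self hab]
    have hw : ∀ v, α * μ v + (1 - α) * ν v = (a * μ v + b * ν v) / (a + b) := by
      intro v; rw [h1α, hα]; field_simp
    have argeq : ∀ (x y : ℝ), x * ((a+b)/2) / (y/2) = x / (y/(a+b)) := by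
      intro x y
      by_cases hy : y = 0
      · simp [hy]
      · field_simp
    have e1 : ∀ v, a * μ v * Real.log (μ v * ((a+b)/2) / ((a * μ v + b * ν v)/2))
        = a * (if μ v = 0 then 0
            else μ v * Real.log (μ v / (α * μ v + (1-α) * ν v))) := by
      intro v
      by_cases hv : μ v = 0
      · simp [hv]
      · rw [if_neg hv, hw, mul_assoc, argeq]
    have e2 : ∀ v, b * ν v * Real.log (ν v * ((a+b)/2) / ((a * μ v + b * ν v)/2))
        = b * (if ν v = 0 then 0
            else ν v * Real.log (ν v / (α * μ v + (1-α) * ν v))) := by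
      intro v
      by_cases hv : ν v = 0
      · simp [hv]
      · rw [if_neg hv, hw, mul_assoc, argeq]
    simp_rw [e1, e2]
    rw [← Finset.mul_sum, ← Finset.mul_sum]
    show (1/2) * (a * KL μ (fun v => α * μ v + (1-α) * ν v))
        + (1/2) * (b * KL ν (fun v => α * μ v + (1-α) * ν v)) = _
    unfold skewJS
    have c1 : (a+b)/2 * α = a/2 := by rw [hα]; field_simp
    have c2 : (a+b)/2 * (1-α) = b/2 := by rw [h1α]; field_simp
    rw [mul_add ((a+b)/2), ← mul_assoc ((a+b)/2) α, ← mul_assoc ((a+b)/2) (1-α), c1, c2]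
    ring


lemma skewJS_self (α : ℝ) (ν : V → ℝ) : skewJS α ν ν = 0 := by
  unfold skewJS
  have h1 : (fun x => α * ν x + (1 - α) * ν x) = ν := funext fun x => by ring
  rw [h1]
  have h2 : KL ν ν = 0 := by
    unfold KL
    apply Finset.sum_eq_zero
    intro v _
    by_cases hv : ν v = 0
    · simp [hv]
    · rw [if_neg hv, div_self hv, Real.log_one, mul_zero]
  rw [h2]
  ring

lemma KL_decomp (π : (t : ℕ) → (Fin t → V) → V → ℝ)
    (hπ0 : ∀ t h v, 0 ≤ π t h v) (hπ1 : ∀ t h, ∑ v, π t h v = 1)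
    (m : (t : ℕ) → (Fin t → V) → ℝ)
    (hm : ∀ (t : ℕ) (h : Fin t → V), seqProb π t h / 2 ≤ m t h)
    (hm0 : ∀ g : Fin 0 → V, m 0 g = 1) (T : ℕ) :
    KL (seqProb π T) (fun x => m T x)
      = ∑ t ∈ Finset.range T, ∑ h : Fin t → V, ∑ v,
          seqProb π t h * π t h v
            * Real.log (π t h v * m t h / m (t+1) (Fin.snoc h v)) := by
  set K : ℕ → ℝ := fun t => ∑ g : Fin t → V,
    if seqProb π t g = 0 then 0
    else seqProb π t g * Real.log (seqProb π t g / m t g) with hK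
  have hstep : ∀ t : ℕ, K (t+1) - K t
      = ∑ h : Fin t → V, ∑ v, seqProb π t h * π t h v
          * Real.log (π t h v * m t h / m (t+1) (Fin.snoc h v)) := by
    intro t
    have h1 : K (t+1) = K t + ∑ h : Fin t → V, ∑ v, seqProb π t h * π t h v
        * Real.log (π t h v * m t h / m (t+1) (Fin.snoc h v)) := by
      rw [hK]
      show (∑ x : Fin (t+1) → V, if seqProb π (t+1) x = 0 then 0
          else seqProb π (t+1) x * Real.log (seqProb π (t+1) x / m (t+1) x)) = _
      rw [sum_snoc_eq]
      have inner : ∀ h : Fin t → V,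
          (∑ v, if seqProb π (t+1) (Fin.snoc h v) = 0 then 0
            else seqProb π (t+1) (Fin.snoc h v)
              * Real.log (seqProb π (t+1) (Fin.snoc h v) / m (t+1) (Fin.snoc h v)))
          = (if seqProb π t h = 0 then 0
              else seqProb π t h * Real.log (seqProb π t h / m t h))
            + ∑ v, seqProb π t h * π t h v
                * Real.log (π t h v * m t h / m (t+1) (Fin.snoc h v)) := by
        intro h
        simp_rw [seqProb_snoc]
        exact kl_step (seqProb π t h) (m t h) (π t h) (fun v => m (t+1) (Fin.snoc h v))
          (seqProb_nonneg π hπ0 h) (hπ0 t h) (hπ1 t h) (hm t h)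
          (fun v => by rw [← seqProb_snoc]; exact hm (t+1) (Fin.snoc h v))
      simp_rw [inner]
      rw [Finset.sum_add_distrib]
    rw [h1]; ring
  have hK0 : K 0 = 0 := by
    show (∑ g : Fin 0 → V, if seqProb π 0 g = 0 then 0
      else seqProb π 0 g * Real.log (seqProb π 0 g / m 0 g)) = 0
    rw [Fintype.sum_eq_single (fun i : Fin 0 => i.elim0)]
    · have h1 : seqProb π 0 (fun i : Fin 0 => i.elim0) = 1 := by simp [seqProb]
      rw [h1, hm0, if_neg one_ne_zero, div_one, Real.log_one, mul_zero]
    · intro x hx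
      exact absurd (funext fun i => i.elim0) hx
  have hKT : KL (seqProb π T) (fun x => m T x) = K T := rfl
  have htel : ∑ t ∈ Finset.range T, (K (t+1) - K t) = K T - K 0 :=
    Finset.sum_range_sub K T
  rw [hKT, ← Finset.sum_congr rfl (fun t _ => hstep t), htel, hK0, sub_zero]

end aux

/-- Token-level skew-JS control implies a sequence-level JS bound for the mixed policy. -/
theorem js_eps_bound {V : Type*} [Fintype V] [DecidableEq V] (T : ℕ)
    (πprim πint : (t : ℕ) → (Fin t → V) → V → ℝ)
    (S : (t : ℕ) → (Fin t → V) → Bool)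
    (hprim : ∀ (t : ℕ) (h : Fin t → V), IsPMF (πprim t h))
    (hint : ∀ (t : ℕ) (h : Fin t → V), IsPMF (πint t h))
    (ε : ℝ) (hε : 0 ≤ ε)
    (hskew : ∀ (t : ℕ) (ht : t < T) (h : Fin t → V),
      0 < prefixMarginal
            (fun x => (seqProb (fun t h => if S t h then πint t h else πprim t h) T x
                        + seqProb πint T x) / 2) ht.le h →
      S t h = false →
      skewJS
        (prefixMarginal (seqProb (fun t h => if S t h then πint t h else πprim t h) T)
            ht.le h /
          (prefixMarginal (seqProb (fun t h => if S t h then πint t h else πprim t h) T)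
              ht.le h
            + prefixMarginal (seqProb πint T) ht.le h))
        (πprim t h) (πint t h) ≤ ε) :
    JS (seqProb (fun t h => if S t h then πint t h else πprim t h) T) (seqProb πint T)
      ≤ ε * ∑ x : Fin T → V,
          ((seqProb (fun t h => if S t h then πint t h else πprim t h) T x
              + seqProb πint T x) / 2) *
            ∑ t : Fin T,
              (if S t (fun i => x (Fin.castLE t.isLt.le i)) then (0 : ℝ) else 1) ∧
    ε * ∑ x : Fin T → V,
          ((seqProb (fun t h => if S t h then πint t h else πprim t h) T x
              + seqProb πint T x) / 2) *
            ∑ t : Fin T,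
              (if S t (fun i => x (Fin.castLE t.isLt.le i)) then (0 : ℝ) else 1)
      = (ε / 2) *
          ((∑ x : Fin T → V,
              seqProb (fun t h => if S t h then πint t h else πprim t h) T x *
                ∑ t : Fin T,
                  (if S t (fun i => x (Fin.castLE t.isLt.le i)) then (0 : ℝ) else 1))
            + ∑ x : Fin T → V,
                seqProb πint T x *
                  ∑ t : Fin T,
                    (if S t (fun i => x (Fin.castLE t.isLt.le i)) then (0 : ℝ) else 1)) := by
  classical
  constructor
  · -- main inequality
    set πmix : (t : ℕ) → (Fin t → V) → V → ℝ :=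
      fun t h => if S t h then πint t h else πprim t h with hπmix
    have hmix : ∀ (t : ℕ) (h : Fin t → V), IsPMF (πmix t h) := by
      intro t h
      by_cases hS : S t h
      · simpa [hπmix, hS] using hint t h
      · simpa [hπmix, hS] using hprim t h
    have hmix0 : ∀ t h v, 0 ≤ πmix t h v := fun t h v => (hmix t h).1 v
    have hmix1 : ∀ t (h : Fin t → V), ∑ v, πmix t h v = 1 := fun t h => (hmix t h).2
    have hint0 : ∀ t h v, 0 ≤ πint t h v := fun t h v => (hint t h).1 v
    have hint1 : ∀ t (h : Fin t → V), ∑ v, πint t h v = 1 := fun t h => (hint t h).2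
    have hJS : JS (seqProb πmix T) (seqProb πint T)
        = ∑ t ∈ Finset.range T, ∑ h : Fin t → V,
            ((seqProb πmix t h + seqProb πint t h)/2)
              * skewJS (seqProb πmix t h / (seqProb πmix t h + seqProb πint t h))
                  (πmix t h) (πint t h) := by
      have d1 := KL_decomp πmix hmix0 hmix1
          (fun t h => (seqProb πmix t h + seqProb πint t h)/2)
          (fun t h => by
            have := seqProb_nonneg πint hint0 (n := t) h; linarith)
          (fun g => by simp [seqProb]) T
      have d2 := KL_decomp πint hint0 hint1
          (fun t h => (seqProb πmix t h + seqProb πint t h)/2)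
          (fun t h => by
            have := seqProb_nonneg πmix hmix0 (n := t) h; linarith)
          (fun g => by simp [seqProb]) T
      show (1/2) * KL (seqProb πmix T)
            (fun x => (seqProb πmix T x + seqProb πint T x)/2)
          + (1/2) * KL (seqProb πint T)
            (fun x => (seqProb πmix T x + seqProb πint T x)/2) = _
      rw [show KL (seqProb πmix T) (fun x => (seqProb πmix T x + seqProb πint T x)/2)
            = KL (seqProb πmix T)
                (fun x => (fun t h => (seqProb πmix t h + seqProb πint t h)/2) T x)
            from rfl, d1,
          show KL (seqProb πint T) (fun x => (seqProb πmix T x + seqProb πint T x)/2)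
            = KL (seqProb πint T)
                (fun x => (fun t h => (seqProb πmix t h + seqProb πint t h)/2) T x)
            from rfl, d2]
      rw [Finset.mul_sum, Finset.mul_sum, ← Finset.sum_add_distrib]
      apply Finset.sum_congr rfl
      intro t _
      rw [Finset.mul_sum, Finset.mul_sum, ← Finset.sum_add_distrib]
      apply Finset.sum_congr rfl
      intro h _
      simp_rw [seqProb_snoc]
      exact combine (seqProb πmix t h) (seqProb πint t h)
        (seqProb_nonneg πmix hmix0 h) (seqProb_nonneg πint hint0 h)
        (πmix t h) (πint t h)
    have hbound : ∀ t ∈ Finset.range T, ∀ h : Fin t → V,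
        ((seqProb πmix t h + seqProb πint t h)/2)
            * skewJS (seqProb πmix t h / (seqProb πmix t h + seqProb πint t h))
                (πmix t h) (πint t h)
          ≤ ε * (((seqProb πmix t h + seqProb πint t h)/2)
              * (if S t h then 0 else 1)) := by
      intro t htmem h
      have htT : t < T := Finset.mem_range.mp htmem
      have ha : 0 ≤ seqProb πmix t h := seqProb_nonneg πmix hmix0 h
      have hb : 0 ≤ seqProb πint t h := seqProb_nonneg πint hint0 h
      cases hS : S t h with
      | true =>
        have hmixint : πmix t h = πint t h := by simp [hπmix, hS]
        rw [hmixint, skewJS_self, mul_zero, if_pos rfl, mul_zero, mul_zero]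
      | false =>
        rw [if_neg (by simp), mul_one]
        rcases eq_or_lt_of_le (by linarith :
            (0:ℝ) ≤ (seqProb πmix t h + seqProb πint t h)/2) with heq | hpos
        · rw [← heq, zero_mul, mul_zero]
        · have hpre : 0 < prefixMarginal
              (fun x => (seqProb πmix T x + seqProb πint T x) / 2) htT.le h := by
            rw [prefixMarginal_add htT.le, prefixMarginal_seqProb πmix hmix1 T t htT.le,
              prefixMarginal_seqProb πint hint1 T t htT.le]
            exact hpos
          have hsk := hskew t htT h hpre hS
          rw [prefixMarginal_seqProb πmix hmix1 T t htT.le,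
            prefixMarginal_seqProb πint hint1 T t htT.le] at hsk
          have hprimmix : πprim t h = πmix t h := by simp [hπmix, hS]
          rw [hprimmix] at hsk
          rw [mul_comm ε]
          exact mul_le_mul_of_nonneg_left hsk hpos.le
    have hRHS : (ε * ∑ x : Fin T → V,
          ((seqProb πmix T x + seqProb πint T x) / 2) *
            ∑ t : Fin T,
              (if S t (fun i => x (Fin.castLE t.isLt.le i)) then (0 : ℝ) else 1))
        = ∑ t ∈ Finset.range T, ∑ h : Fin t → V,
            ε * (((seqProb πmix t h + seqProb πint t h)/2)
              * (if S t h then 0 else 1)) := by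
      have swap : (∑ x : Fin T → V,
            ((seqProb πmix T x + seqProb πint T x) / 2) *
              ∑ t : Fin T,
                (if S t (fun i => x (Fin.castLE t.isLt.le i)) then (0 : ℝ) else 1))
          = ∑ t : Fin T, ∑ x : Fin T → V,
              ((seqProb πmix T x + seqProb πint T x) / 2) *
                (if S t (fun i => x (Fin.castLE t.isLt.le i)) then (0 : ℝ) else 1) := by
        simp_rw [Finset.mul_sum]
        rw [Finset.sum_comm]
      have grp : ∀ t : Fin T, (∑ x : Fin T → V,
            ((seqProb πmix T x + seqProb πint T x) / 2) *
              (if S t (fun i => x (Fin.castLE t.isLt.le i)) then (0 : ℝ) else 1))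
          = ∑ h : Fin (t : ℕ) → V,
              ((seqProb πmix (t : ℕ) h + seqProb πint (t : ℕ) h)/2)
                * (if S t h then 0 else 1) := by
        intro t
        rw [← prefixMarginal_grouping t.isLt.le
          (fun x => (seqProb πmix T x + seqProb πint T x) / 2)
          (fun h => if S t h then (0:ℝ) else 1)]
        apply Finset.sum_congr rfl
        intro h _
        rw [prefixMarginal_add t.isLt.le, prefixMarginal_seqProb πmix hmix1 T t t.isLt.le,
          prefixMarginal_seqProb πint hint1 T t t.isLt.le]
      rw [swap]
      rw [Finset.sum_congr rfl (fun t _ => grp t)]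
      rw [Fin.sum_univ_eq_sum_range (fun t => ∑ h : Fin t → V,
        ((seqProb πmix t h + seqProb πint t h)/2) * (if S t h then (0:ℝ) else 1)) T]
      rw [Finset.mul_sum]
      apply Finset.sum_congr rfl
      intro t _
      rw [Finset.mul_sum]
    rw [hJS, hRHS]
    apply Finset.sum_le_sum
    intro t ht
    apply Finset.sum_le_sum
    intro h _
    exact hbound t ht h
  · -- algebraic identity
    rw [← Finset.sum_add_distrib, Finset.mul_sum, Finset.mul_sum]
    exact Finset.sum_congr rfl fun x _ => by ring
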